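/- Let v ∈ S_d, a_n^{(1)}(v) := g_0^v(S_{n+d-1})/(n+d-1)!, and β_{ℓ-1}(v) := a_{ℓ-1}^{(1)}(v) - a_ℓ^{(1)}(v). Fix ℓ ≥ 2. Then for all n > ℓ + 2d: 0 ≤ a_n^{(1)}(v) - a_{n-1}^{(1)}(v) + β_{ℓ-1}(v) · a_{n-ℓ-d+1}^{(1)}(v) ≤ ((d-1)/d!) · a_{n-ℓ-2d+2}^{(1)}(v). -/

import Mathlib

open Finset MeasureTheory Polynomial

attribute [local instance] Classical.propDecidable

/-- `w` (restricted to positions `i, i+1, ..., i+d-1`) is a consecutive occurrence of the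
pattern `v` (whose entries are `v 0, ..., v (d-1)`), i.e. the window is order-isomorphic
(respecting equalities) to the pattern. -/
def consecOcc {α : Type*} [LinearOrder α] (d : ℕ) (v : ℕ → ℕ) (w : ℕ → α) (i : ℕ) : Prop :=
  ∀ p q, p < d → q < d →
    ((w (i + p) < w (i + q) ↔ v p < v q) ∧ (w (i + p) = w (i + q) ↔ v p = v q))

/-- number of consecutive occurrences of the pattern `v` of length `d` in the word `w`
of length `n`. -/
noncomputable def conCount {α : Type*} [LinearOrder α] (d n : ℕ) (v : ℕ → ℕ) (w : ℕ → α) : ℕ :=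
  ((Finset.range n).filter (fun i => i + d ≤ n ∧ consecOcc d v w i)).card

/-- the word (ℕ-valued, 0-indexed) associated with a permutation of `Fin n`. -/
def permWord {n : ℕ} (σ : Equiv.Perm (Fin n)) : ℕ → ℕ :=
  fun j => if h : j < n then (σ ⟨j, h⟩ : ℕ) else 0

/-- `g_r^v(S_n)`: number of permutations of length `n` with exactly `r` consecutive
occurrences of the pattern `v` (of length `d`). -/
noncomputable def gPerm (d : ℕ) (v : ℕ → ℕ) (n r : ℕ) : ℕ :=
  Nat.card {σ : Equiv.Perm (Fin n) // conCount d n v (permWord σ) = r}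

/-- the word (ℕ-valued, 0-indexed) associated with a `k`-ary word of length `n`. -/
def wordFn {k n : ℕ} (w : Fin n → Fin k) : ℕ → ℕ :=
  fun j => if h : j < n then (w ⟨j, h⟩ : ℕ) else 0

/-- `g_r^v([k]^n)`: number of `k`-ary words of length `n` with exactly `r` consecutive
occurrences of the pattern `v` (of length `d`). -/
noncomputable def gWord (d k n r : ℕ) (v : ℕ → ℕ) : ℕ :=
  Nat.card {w : Fin n → Fin k // conCount d n v (wordFn w) = r}

/-- `i` is in the overlap set `O_v` of the pattern `v` of length `d`:
`1 ≤ i < d` and the first `i` entries have the same relative order as the last `i` entries. -/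
def inOverlap (d : ℕ) (v : ℕ → ℕ) (i : ℕ) : Prop :=
  1 ≤ i ∧ i < d ∧ ∀ p q, p < i → q < i → (v p < v q ↔ v (d - i + p) < v (d - i + q))

namespace ARI

lemma perm_eq_of_lt_iff {t : ℕ} {ρ ρ' : Equiv.Perm (Fin t)}
    (h : ∀ p q, ρ p < ρ q ↔ ρ' p < ρ' q) : ρ = ρ' := by
  haveI hwf : WellFoundedLT (Fin t) := inferInstance
  have hm : StrictMono (fun x => ρ' (ρ.symm x)) := by
    intro a b hab
    exact (h (ρ.symm a) (ρ.symm b)).mp (by simpa using hab)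
  have hr : Set.range (fun x => ρ' (ρ.symm x)) = Set.range (id : Fin t → Fin t) := by
    have h1 : Function.Surjective (fun x => ρ' (ρ.symm x)) :=
      ρ'.surjective.comp ρ.symm.surjective
    simp [h1.range_eq]
  have hfun := (StrictMono.range_inj (β := Fin t) (γ := Fin t) hm strictMono_id).1 hr
  ext x
  have := congrFun hfun (ρ x)
  simp only [Equiv.symm_apply_apply, id_eq] at this
  exact congrArg Fin.val this.symm

variable {N : ℕ}

def winMap (s t : ℕ) (h : s + t ≤ N) (σ : Equiv.Perm (Fin N)) : Fin t → Fin N :=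
  fun p => σ ⟨s + p.1, by omega⟩

lemma winMap_inj (s t : ℕ) (h : s + t ≤ N) (σ : Equiv.Perm (Fin N)) :
    Function.Injective (winMap s t h σ) := by
  intro p q hpq
  have := σ.injective hpq
  simpa [Fin.ext_iff] using this

lemma winSet_card (s t : ℕ) (h : s + t ≤ N) (σ : Equiv.Perm (Fin N)) :
    ((Finset.univ : Finset (Fin t)).image (winMap s t h σ)).card = t := by
  rw [Finset.card_image_of_injective _ (winMap_inj s t h σ), Finset.card_univ, Fintype.card_fin]

noncomputable def stdAux (s t : ℕ) (h : s + t ≤ N) (σ : Equiv.Perm (Fin N)) : Fin t → Fin t :=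
  fun p => (Finset.orderIsoOfFin _ (winSet_card s t h σ)).symm
    ⟨winMap s t h σ p, Finset.mem_image_of_mem _ (Finset.mem_univ p)⟩

lemma stdAux_lt_iff (s t : ℕ) (h : s + t ≤ N) (σ : Equiv.Perm (Fin N)) (p q : Fin t) :
    stdAux s t h σ p < stdAux s t h σ q ↔ winMap s t h σ p < winMap s t h σ q := by
  rw [stdAux, stdAux, OrderIso.lt_iff_lt]
  exact Subtype.mk_lt_mk

lemma stdAux_inj (s t : ℕ) (h : s + t ≤ N) (σ : Equiv.Perm (Fin N)) :
    Function.Injective (stdAux s t h σ) := by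
  intro p q hpq
  apply winMap_inj s t h σ
  have := (Finset.orderIsoOfFin _ (winSet_card s t h σ)).symm.injective hpq
  simpa using this

noncomputable def std (s t : ℕ) (h : s + t ≤ N) (σ : Equiv.Perm (Fin N)) : Equiv.Perm (Fin t) :=
  Equiv.ofBijective (stdAux s t h σ) (Finite.injective_iff_bijective.1 (stdAux_inj s t h σ))

lemma std_lt_iff (s t : ℕ) (h : s + t ≤ N) (σ : Equiv.Perm (Fin N)) (p q : Fin t) :
    std s t h σ p < std s t h σ q ↔
      σ ⟨s + p.1, by omega⟩ < σ ⟨s + q.1, by omega⟩ := by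
  rw [std, Equiv.ofBijective_apply, Equiv.ofBijective_apply, stdAux_lt_iff]
  rfl

lemma std_eq_iff (s t : ℕ) (h : s + t ≤ N) (σ : Equiv.Perm (Fin N)) (p q : Fin t) :
    std s t h σ p = std s t h σ q ↔ p = q :=
  ⟨fun hpq => (std s t h σ).injective hpq, fun hpq => by rw [hpq]⟩

def ivEquiv (s t : ℕ) (h : s + t ≤ N) : Fin t ≃ {j : Fin N // s ≤ j.1 ∧ j.1 < s + t} where
  toFun p := ⟨⟨s + p.1, by omega⟩, ⟨Nat.le_add_right s p.1, Nat.add_lt_add_left p.2 s⟩⟩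
  invFun j := ⟨j.1.1 - s, by have := j.2; omega⟩
  left_inv p := by ext; simp
  right_inv j := by ext; have := j.2; simp; omega

noncomputable def rperm (s t : ℕ) (h : s + t ≤ N) (ρ : Equiv.Perm (Fin t)) :
    Equiv.Perm (Fin N) :=
  ρ.extendDomain (ivEquiv s t h)

lemma rperm_apply (s t : ℕ) (h : s + t ≤ N) (ρ : Equiv.Perm (Fin t)) (p : Fin t) :
    rperm s t h ρ ⟨s + p.1, by omega⟩ = ⟨s + (ρ p).1, by omega⟩ := by
  have h1 : (⟨s + p.1, by omega⟩ : Fin N) = ((ivEquiv s t h) p).1 := rfl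
  have h2 : (⟨s + (ρ p).1, by omega⟩ : Fin N) = ((ivEquiv s t h) (ρ p)).1 := rfl
  rw [rperm, h1, h2]
  exact Equiv.Perm.extendDomain_apply_image ρ (ivEquiv s t h) p

lemma rperm_apply_notin (s t : ℕ) (h : s + t ≤ N) (ρ : Equiv.Perm (Fin t)) (j : Fin N)
    (hj : ¬ (s ≤ j.1 ∧ j.1 < s + t)) : rperm s t h ρ j = j :=
  Equiv.Perm.extendDomain_apply_not_subtype ρ (ivEquiv s t h) hj

lemma std_mul_rperm (s t : ℕ) (h : s + t ≤ N) (σ : Equiv.Perm (Fin N))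
    (ρ : Equiv.Perm (Fin t)) :
    std s t h (σ * rperm s t h ρ) = std s t h σ * ρ := by
  apply perm_eq_of_lt_iff
  intro p q
  rw [std_lt_iff, Equiv.Perm.mul_apply, Equiv.Perm.mul_apply, rperm_apply, rperm_apply]
  rw [Equiv.Perm.mul_apply, Equiv.Perm.mul_apply, ← std_lt_iff s t h σ (ρ p) (ρ q)]

lemma std_mul_rperm_disj (s t : ℕ) (h : s + t ≤ N) (s' t' : ℕ) (h' : s' + t' ≤ N)
    (hdisj : s + t ≤ s' ∨ s' + t' ≤ s) (σ : Equiv.Perm (Fin N)) (ρ : Equiv.Perm (Fin t')) :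
    std s t h (σ * rperm s' t' h' ρ) = std s t h σ := by
  apply perm_eq_of_lt_iff
  intro p q
  rw [std_lt_iff, std_lt_iff, Equiv.Perm.mul_apply, Equiv.Perm.mul_apply,
    rperm_apply_notin s' t' h' ρ _ (by simp; intro h1; have := p.2; omega),
    rperm_apply_notin s' t' h' ρ _ (by simp; intro h1; have := q.2; omega)]

lemma fiber_count {G : Type*} [Group G] [Fintype G] (F : Equiv.Perm (Fin N) → G)
    (R : G → Equiv.Perm (Fin N)) (hFR : ∀ σ b, F (σ * R b) = F σ * b)
    (P : G → Prop) :
    Fintype.card G * Nat.card {σ : Equiv.Perm (Fin N) // P (F σ)}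
      = Nat.card {g : G // P g} * Nat.factorial N := by
  rw [Nat.card_eq_fintype_card, Nat.card_eq_fintype_card, Fintype.card_subtype,
    Fintype.card_subtype]
  have key : ∀ g : G, (Finset.univ.filter fun σ => F σ = g).card
      = (Finset.univ.filter fun σ => F σ = 1).card := by
    intro g
    apply Finset.card_bij' (fun σ _ => σ * (R g)⁻¹) (fun σ _ => σ * R g)
    · intro σ hσ
      simp only [Finset.mem_filter, Finset.mem_univ, true_and] at hσ ⊢
      have := hFR (σ * (R g)⁻¹) g
      rw [inv_mul_cancel_right] at this
      rw [hσ] at this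
      exact mul_right_cancel (by rw [← this, one_mul])
    · intro σ hσ
      simp only [Finset.mem_filter, Finset.mem_univ, true_and] at hσ ⊢
      rw [hFR, hσ, one_mul]
    · intro σ _; rw [inv_mul_cancel_right]
    · intro σ _; rw [mul_inv_cancel_right]
  have hcardN : (Finset.univ : Finset (Equiv.Perm (Fin N))).card = Nat.factorial N := by
    simp [Finset.card_univ, Fintype.card_perm]
  have hsum : (Finset.univ : Finset (Equiv.Perm (Fin N))).card
      = ∑ g : G, (Finset.univ.filter fun σ => F σ = g).card :=
    Finset.card_eq_sum_card_fiberwise (fun σ _ => Finset.mem_univ (F σ))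
  have hsum2 : (Finset.univ.filter fun σ => P (F σ)).card
      = ∑ g ∈ Finset.univ.filter P, ((Finset.univ.filter fun σ => P (F σ)).filter
          fun σ => F σ = g).card :=
    Finset.card_eq_sum_card_fiberwise (fun σ hσ => by
      simp only [Finset.mem_coe, Finset.mem_filter, Finset.mem_univ, true_and] at hσ ⊢; exact hσ)
  have hsub : ∀ g ∈ Finset.univ.filter P, ((Finset.univ.filter fun σ => P (F σ)).filter
      fun σ => F σ = g).card = (Finset.univ.filter fun σ => F σ = 1).card := by
    intro g hg
    simp only [Finset.mem_filter, Finset.mem_univ, true_and] at hg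
    rw [Finset.filter_filter, ← key g]
    congr 1
    apply Finset.filter_congr
    intro σ _
    constructor
    · rintro ⟨_, h2⟩; exact h2
    · intro h2; exact ⟨by rw [h2]; exact hg, h2⟩
  have hN : Nat.factorial N = Fintype.card G * (Finset.univ.filter fun σ => F σ = 1).card := by
    rw [← hcardN, hsum, Finset.sum_congr rfl (fun g _ => key g), Finset.sum_const,
      Finset.card_univ, smul_eq_mul]
  rw [hsum2, Finset.sum_congr rfl hsub, Finset.sum_const, smul_eq_mul, hN]
  ring

lemma L1 {s t : ℕ} (h : s + t ≤ N) (P : Equiv.Perm (Fin t) → Prop) :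
    Nat.factorial t * Nat.card {σ : Equiv.Perm (Fin N) // P (std s t h σ)}
      = Nat.card {τ : Equiv.Perm (Fin t) // P τ} * Nat.factorial N := by
  have := fiber_count (std s t h) (rperm s t h) (fun σ ρ => std_mul_rperm s t h σ ρ) P
  rwa [Fintype.card_perm, Fintype.card_fin] at this

lemma L2 {s₁ t₁ s₂ t₂ : ℕ} (h₁ : s₁ + t₁ ≤ N) (h₂ : s₂ + t₂ ≤ N) (hd : s₁ + t₁ ≤ s₂)
    (P : Equiv.Perm (Fin t₁) → Prop) (Q : Equiv.Perm (Fin t₂) → Prop) :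
    Nat.factorial t₁ * Nat.factorial t₂ *
      Nat.card {σ : Equiv.Perm (Fin N) // P (std s₁ t₁ h₁ σ) ∧ Q (std s₂ t₂ h₂ σ)}
      = Nat.card {τ : Equiv.Perm (Fin t₁) // P τ} * Nat.card {τ : Equiv.Perm (Fin t₂) // Q τ}
        * Nat.factorial N := by
  have hFR : ∀ (σ : Equiv.Perm (Fin N)) (b : Equiv.Perm (Fin t₁) × Equiv.Perm (Fin t₂)),
      (fun σ => (std s₁ t₁ h₁ σ, std s₂ t₂ h₂ σ))
          (σ * ((fun b => rperm s₁ t₁ h₁ b.1 * rperm s₂ t₂ h₂ b.2) b))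
        = (fun σ => (std s₁ t₁ h₁ σ, std s₂ t₂ h₂ σ)) σ * b := by
    intro σ b
    have e1 : σ * (rperm s₁ t₁ h₁ b.1 * rperm s₂ t₂ h₂ b.2)
        = (σ * rperm s₁ t₁ h₁ b.1) * rperm s₂ t₂ h₂ b.2 := by rw [mul_assoc]
    simp only [e1, Prod.ext_iff, Prod.fst_mul, Prod.snd_mul]
    refine ⟨?_, ?_⟩
    · rw [std_mul_rperm_disj s₁ t₁ h₁ s₂ t₂ h₂ (Or.inl hd), std_mul_rperm]
    · rw [std_mul_rperm, std_mul_rperm_disj s₂ t₂ h₂ s₁ t₁ h₁ (Or.inr hd)]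
  have := fiber_count (fun σ => (std s₁ t₁ h₁ σ, std s₂ t₂ h₂ σ))
    (fun b => rperm s₁ t₁ h₁ b.1 * rperm s₂ t₂ h₂ b.2) hFR (fun g => P g.1 ∧ Q g.2)
  rw [Fintype.card_prod, Fintype.card_perm, Fintype.card_perm, Fintype.card_fin,
    Fintype.card_fin] at this
  refine this.trans ?_
  congr 1
  rw [Nat.card_congr (Equiv.subtypeProdEquivProd
    (p := fun τ : Equiv.Perm (Fin t₁) => P τ) (q := fun τ : Equiv.Perm (Fin t₂) => Q τ)),
    Nat.card_prod]

lemma permWord_std_iff {N : ℕ} (s t : ℕ) (h : s + t ≤ N) (σ : Equiv.Perm (Fin N))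
    {x y : ℕ} (hx : x < t) (hy : y < t) :
    (permWord (std s t h σ) x < permWord (std s t h σ) y
      ↔ permWord σ (s + x) < permWord σ (s + y))
    ∧ (permWord (std s t h σ) x = permWord (std s t h σ) y
      ↔ permWord σ (s + x) = permWord σ (s + y)) := by
  have hx' : s + x < N := by omega
  have hy' : s + y < N := by omega
  simp only [permWord, dif_pos hx, dif_pos hy, dif_pos hx', dif_pos hy']
  constructor
  · rw [← Fin.lt_def, ← Fin.lt_def]
    exact std_lt_iff s t h σ ⟨x, hx⟩ ⟨y, hy⟩
  · constructor
    · intro he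
      have h1 : (⟨x, hx⟩ : Fin t) = ⟨y, hy⟩ := (std s t h σ).injective (Fin.val_injective he)
      have h2 : x = y := congrArg Fin.val h1
      subst h2; rfl
    · intro he
      have h1 : (⟨s + x, hx'⟩ : Fin N) = ⟨s + y, hy'⟩ := σ.injective (Fin.val_injective he)
      have h2 : x = y := by have := congrArg Fin.val h1; simp at this; omega
      subst h2; rfl

lemma consecOcc_std {N : ℕ} (d : ℕ) (vw : ℕ → ℕ) (s t : ℕ) (h : s + t ≤ N)
    (σ : Equiv.Perm (Fin N)) (i : ℕ) (hi : i + d ≤ t) :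
    consecOcc d vw (permWord (std s t h σ)) i ↔ consecOcc d vw (permWord σ) (s + i) := by
  constructor
  · intro H p q hp hq
    obtain ⟨h1, h2⟩ := H p q hp hq
    have hat := permWord_std_iff s t h σ (x := i + p) (y := i + q) (by omega) (by omega)
    have e1 : s + (i + p) = s + i + p := by omega
    have e2 : s + (i + q) = s + i + q := by omega
    rw [e1, e2] at hat
    exact ⟨hat.1.symm.trans h1, hat.2.symm.trans h2⟩
  · intro H p q hp hq
    obtain ⟨h1, h2⟩ := H p q hp hq
    have hat := permWord_std_iff s t h σ (x := i + p) (y := i + q) (by omega) (by omega)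
    have e1 : s + (i + p) = s + i + p := by omega
    have e2 : s + (i + q) = s + i + q := by omega
    rw [e1, e2] at hat
    exact ⟨hat.1.trans h1, hat.2.trans h2⟩

lemma gPerm_zero (d : ℕ) (hd : 1 ≤ d) (vw : ℕ → ℕ) (m : ℕ) :
    gPerm d vw m 0 = Nat.card {τ : Equiv.Perm (Fin m) //
      ∀ i, i + d ≤ m → ¬ consecOcc d vw (permWord τ) i} := by
  unfold gPerm
  apply Nat.card_congr (Equiv.subtypeEquivRight _)
  intro τ
  rw [conCount, Finset.card_eq_zero, Finset.filter_eq_empty_iff]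
  constructor
  · intro H i hid hocc
    exact H (Finset.mem_range.2 (by omega)) ⟨hid, hocc⟩
  · intro H i _ hc
    exact H i hc.1 hc.2

lemma CL1 {N : ℕ} (d : ℕ) (hd : 1 ≤ d) (vw : ℕ → ℕ) (s m : ℕ)
    (h : s + (m + d - 1) ≤ N) :
    Nat.factorial (m + d - 1) *
      Nat.card {σ : Equiv.Perm (Fin N) // ∀ i < m, ¬ consecOcc d vw (permWord σ) (s + i)}
      = gPerm d vw (m + d - 1) 0 * Nat.factorial N := by
  have hL := L1 h (fun τ : Equiv.Perm (Fin (m + d - 1)) =>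
    ∀ i, i + d ≤ m + d - 1 → ¬ consecOcc d vw (permWord τ) i)
  rw [gPerm_zero d hd vw (m + d - 1)]
  rw [← hL]
  congr 1
  apply Nat.card_congr (Equiv.subtypeEquivRight _)
  intro σ
  constructor
  · intro H i hit hocc
    exact H i (by omega) ((consecOcc_std d vw s (m + d - 1) h σ i (by omega)).mp hocc)
  · intro H i him hocc
    exact H i (by omega) ((consecOcc_std d vw s (m + d - 1) h σ i (by omega)).mpr hocc)

lemma CL2 {N : ℕ} (d : ℕ) (hd : 1 ≤ d) (vw : ℕ → ℕ) (m t₂ s₂ : ℕ)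
    (h1 : m + d - 1 ≤ s₂) (h2 : s₂ + t₂ ≤ N) (Q : Equiv.Perm (Fin t₂) → Prop) :
    Nat.factorial (m + d - 1) * Nat.factorial t₂ *
      Nat.card {σ : Equiv.Perm (Fin N) //
        (∀ i < m, ¬ consecOcc d vw (permWord σ) (0 + i)) ∧ Q (std s₂ t₂ h2 σ)}
      = gPerm d vw (m + d - 1) 0 * Nat.card {τ : Equiv.Perm (Fin t₂) // Q τ}
        * Nat.factorial N := by
  have h1' : 0 + (m + d - 1) ≤ N := by omega
  have hL := L2 h1' h2 (by omega)
    (fun τ : Equiv.Perm (Fin (m + d - 1)) =>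
      ∀ i, i + d ≤ m + d - 1 → ¬ consecOcc d vw (permWord τ) i) Q
  rw [gPerm_zero d hd vw (m + d - 1)]
  rw [← hL]
  congr 1
  apply Nat.card_congr (Equiv.subtypeEquivRight _)
  intro σ
  have key : (∀ i, i + d ≤ m + d - 1 →
        ¬ consecOcc d vw (permWord (std 0 (m + d - 1) h1' σ)) i)
      ↔ (∀ i < m, ¬ consecOcc d vw (permWord σ) (0 + i)) := by
    constructor
    · intro H i him hocc
      exact H i (by omega) ((consecOcc_std d vw 0 (m + d - 1) h1' σ i (by omega)).mpr hocc)
    · intro H i hit hocc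
      exact H i (by omega) ((consecOcc_std d vw 0 (m + d - 1) h1' σ i (by omega)).mp hocc)
  rw [key]

lemma countSingle (d : ℕ) (v : Equiv.Perm (Fin d)) :
    Nat.card {τ : Equiv.Perm (Fin d) //
      consecOcc d (permWord v) (permWord τ) 0} = 1 := by
  have : ∀ τ : Equiv.Perm (Fin d),
      consecOcc d (permWord v) (permWord τ) 0 ↔ τ = v := by
    intro τ
    constructor
    · intro H
      apply perm_eq_of_lt_iff
      intro p q
      have := (H p.1 q.1 p.2 q.2).1
      simp only [permWord, Nat.zero_add, zero_add, dif_pos p.2, dif_pos q.2] at this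
      rw [Fin.lt_def, Fin.lt_def]
      have ep : (⟨p.1, p.2⟩ : Fin d) = p := rfl
      have eq' : (⟨q.1, q.2⟩ : Fin d) = q := rfl
      rw [ep, eq'] at this
      exact this
    · intro H
      subst H
      intro p q hp hq
      simp [permWord, dif_pos hp, dif_pos hq]
  rw [Nat.card_congr (Equiv.subtypeEquivRight this), Nat.card_eq_fintype_card,
    Fintype.card_subtype_eq]

lemma card_partition {α : Type*} [Fintype α] (p q : α → Prop) :
    Nat.card {x // p x ∧ q x} + Nat.card {x // p x ∧ ¬ q x} = Nat.card {x // p x} := by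
  rw [Nat.card_eq_fintype_card, Nat.card_eq_fintype_card, Nat.card_eq_fintype_card,
    Fintype.card_subtype, Fintype.card_subtype, Fintype.card_subtype]
  rw [← Finset.filter_filter, ← Finset.filter_filter]
  exact Finset.card_filter_add_card_filter_not (p := q)

lemma card_mono {α : Type*} [Fintype α] (p q : α → Prop) (h : ∀ x, p x → q x) :
    Nat.card {x // p x} ≤ Nat.card {x // q x} := by
  rw [Nat.card_eq_fintype_card, Nat.card_eq_fintype_card]
  exact Fintype.card_subtype_mono p q h

lemma card_or_le {α : Type*} [Fintype α] (p q : α → Prop) :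
    Nat.card {x // p x ∨ q x} ≤ Nat.card {x // p x} + Nat.card {x // q x} := by
  have e1 : ∀ (r : α → Prop), Nat.card {x // r x} = (Finset.univ.filter r).card := by
    intro r
    rw [Nat.card_eq_fintype_card, Fintype.card_subtype]
  rw [e1, e1, e1]
  refine le_trans (Finset.card_le_card ?_) (Finset.card_union_le _ _)
  intro x hx
  simp only [Finset.mem_filter, Finset.mem_univ, true_and, Finset.mem_union] at hx ⊢
  exact hx

lemma card_exists_le {α : Type*} [Fintype α] (G : Finset ℕ) (p : ℕ → α → Prop) :
    Nat.card {x // ∃ j ∈ G, p j x} ≤ ∑ j ∈ G, Nat.card {x // p j x} := by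
  induction G using Finset.induction_on with
  | empty =>
      have : IsEmpty {x : α // ∃ j ∈ (∅ : Finset ℕ), p j x} := by
        constructor
        rintro ⟨x, j, hj, _⟩
        simp at hj
      simp [Nat.card_of_isEmpty]
  | @insert a G ha ih =>
      have hcongr : Nat.card {x : α // ∃ j ∈ insert a G, p j x}
          = Nat.card {x : α // p a x ∨ ∃ j ∈ G, p j x} := by
        apply Nat.card_congr (Equiv.subtypeEquivRight _)
        intro x
        exact Finset.exists_mem_insert a G (fun j => p j x)
      rw [hcongr, Finset.sum_insert ha]
      exact le_trans (card_or_le _ _) (Nat.add_le_add_left ih _)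

end ARI

open ARI

/-- For any pattern `v ∈ S_d`, `a_n^{(1)}(v) = g_0^v(S_{n+d-1})/(n+d-1)!`,
`β_{ℓ-1}(v) = a_{ℓ-1}^{(1)}(v) - a_ℓ^{(1)}(v)`, `ℓ ≥ 2`, and `n > ℓ + 2d`:
`0 ≤ a_n - a_{n-1} + β_{ℓ-1} a_{n-ℓ-d+1} ≤ ((d-1)/d!) a_{n-ℓ-2d+2}`. -/
theorem a_recursion_inequality (d : ℕ) (hd : 1 ≤ d) (v : Equiv.Perm (Fin d))
    (a : ℕ → ℝ)
    (ha : ∀ k : ℕ, a k =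
      (gPerm d (permWord v) (k + d - 1) 0 : ℝ) / (Nat.factorial (k + d - 1)))
    (ℓ : ℕ) (hℓ : 2 ≤ ℓ) (n : ℕ) (hn : ℓ + 2 * d < n) :
    0 ≤ a n - a (n - 1) + (a (ℓ - 1) - a ℓ) * a (n - ℓ - d + 1) ∧
      a n - a (n - 1) + (a (ℓ - 1) - a ℓ) * a (n - ℓ - d + 1) ≤
        ((d : ℝ) - 1) / (Nat.factorial d) * a (n - ℓ - 2 * d + 2) := by
  classical
  have hfne : ∀ m : ℕ, ((Nat.factorial m : ℝ)) ≠ 0 :=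
    fun m => Nat.cast_ne_zero.2 (Nat.factorial_ne_zero m)
  have hfpos : ∀ m : ℕ, (0:ℝ) < (Nat.factorial m : ℝ) :=
    fun m => Nat.cast_pos.2 (Nat.factorial_pos m)
  -- gPerm values in terms of a
  have hg : ∀ k : ℕ, (gPerm d (permWord v) (k + d - 1) 0 : ℝ)
      = a k * (Nat.factorial (k + d - 1) : ℝ) := by
    intro k
    rw [ha k]
    field_simp
  set FN : ℝ := (Nat.factorial (n + d - 1) : ℝ) with hFN
  -- ========== count A ==========
  have h1 := CL1 (N := n + d - 1) d hd (permWord v) 0 n (by omega)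
  have hA : (Nat.card {σ : Equiv.Perm (Fin (n + d - 1)) //
      ∀ i < n, ¬ consecOcc d (permWord v) (permWord σ) (0 + i)} : ℝ) = a n * FN := by
    apply mul_left_cancel₀ (hfne (n + d - 1))
    have h1R : (Nat.factorial (n + d - 1) : ℝ) * (Nat.card {σ : Equiv.Perm (Fin (n + d - 1)) //
        ∀ i < n, ¬ consecOcc d (permWord v) (permWord σ) (0 + i)} : ℝ)
        = (gPerm d (permWord v) (n + d - 1) 0 : ℝ) * FN := by
      rw [hFN]; exact_mod_cast h1
    rw [h1R, hg n]
    ring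
  -- ========== count B ==========
  have h2 := CL1 (N := n + d - 1) d hd (permWord v) 0 (n - 1) (by omega)
  have hB : (Nat.card {σ : Equiv.Perm (Fin (n + d - 1)) //
      ∀ i < n - 1, ¬ consecOcc d (permWord v) (permWord σ) (0 + i)} : ℝ) = a (n - 1) * FN := by
    apply mul_left_cancel₀ (hfne (n - 1 + d - 1))
    have h2R : (Nat.factorial (n - 1 + d - 1) : ℝ) * (Nat.card {σ : Equiv.Perm (Fin (n + d - 1)) //
        ∀ i < n - 1, ¬ consecOcc d (permWord v) (permWord σ) (0 + i)} : ℝ)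
        = (gPerm d (permWord v) (n - 1 + d - 1) 0 : ℝ) * FN := by
      rw [hFN]; exact_mod_cast h2
    rw [h2R, hg (n - 1)]
    ring
  -- ========== partition: C + A = B ==========
  have h3 := card_partition
    (fun σ : Equiv.Perm (Fin (n + d - 1)) =>
      ∀ i < n - 1, ¬ consecOcc d (permWord v) (permWord σ) (0 + i))
    (fun σ => consecOcc d (permWord v) (permWord σ) (n - 1))
  have hPA : Nat.card {σ : Equiv.Perm (Fin (n + d - 1)) //
      (∀ i < n - 1, ¬ consecOcc d (permWord v) (permWord σ) (0 + i)) ∧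
        ¬ consecOcc d (permWord v) (permWord σ) (n - 1)}
      = Nat.card {σ : Equiv.Perm (Fin (n + d - 1)) //
      ∀ i < n, ¬ consecOcc d (permWord v) (permWord σ) (0 + i)} := by
    apply Nat.card_congr (Equiv.subtypeEquivRight _)
    intro σ
    constructor
    · rintro ⟨hb, hq⟩ i hi
      rcases Nat.lt_or_ge i (n - 1) with h' | h'
      · exact hb i h'
      · have hieq : i = n - 1 := by omega
        subst hieq
        intro hocc
        apply hq
        rw [show (0 + (n - 1) : ℕ) = n - 1 from by omega] at hocc
        exact hocc
    · intro hA'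
      refine ⟨fun i hi => hA' i (by omega), fun hocc => hA' (n - 1) (by omega) ?_⟩
      rw [show (0 + (n - 1) : ℕ) = n - 1 from by omega]
      exact hocc
  rw [hPA] at h3
  -- hC : C = (a (n-1) - a n) * FN
  have hC : (Nat.card {σ : Equiv.Perm (Fin (n + d - 1)) //
      (∀ i < n - 1, ¬ consecOcc d (permWord v) (permWord σ) (0 + i)) ∧
        consecOcc d (permWord v) (permWord σ) (n - 1)} : ℝ) = (a (n - 1) - a n) * FN := by
    have h3R : (Nat.card {σ : Equiv.Perm (Fin (n + d - 1)) //
        (∀ i < n - 1, ¬ consecOcc d (permWord v) (permWord σ) (0 + i)) ∧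
          consecOcc d (permWord v) (permWord σ) (n - 1)} : ℝ)
        + (Nat.card {σ : Equiv.Perm (Fin (n + d - 1)) //
        ∀ i < n, ¬ consecOcc d (permWord v) (permWord σ) (0 + i)} : ℝ)
        = (Nat.card {σ : Equiv.Perm (Fin (n + d - 1)) //
        ∀ i < n - 1, ¬ consecOcc d (permWord v) (permWord σ) (0 + i)} : ℝ) := by
      exact_mod_cast congrArg (Nat.cast (R := ℝ)) h3
    rw [hA, hB] at h3R
    linarith
  -- ========== count D ==========
  have h2pf : (n - ℓ) + (ℓ + d - 1) ≤ n + d - 1 := by omega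
  have h4 := CL2 (N := n + d - 1) d hd (permWord v) (n - ℓ - d + 1) (ℓ + d - 1) (n - ℓ)
    (by omega) h2pf
    (fun τ => (∀ i < ℓ - 1, ¬ consecOcc d (permWord v) (permWord τ) (0 + i)) ∧
      consecOcc d (permWord v) (permWord τ) (ℓ - 1))
  have hDD : Nat.card {σ : Equiv.Perm (Fin (n + d - 1)) //
      (∀ i < n - ℓ - d + 1, ¬ consecOcc d (permWord v) (permWord σ) (0 + i)) ∧
        (∀ i < ℓ - 1, ¬ consecOcc d (permWord v)
            (permWord (std (n - ℓ) (ℓ + d - 1) h2pf σ)) (0 + i)) ∧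
          consecOcc d (permWord v) (permWord (std (n - ℓ) (ℓ + d - 1) h2pf σ)) (ℓ - 1)}
      = Nat.card {σ : Equiv.Perm (Fin (n + d - 1)) //
      (∀ i < n - ℓ - d + 1, ¬ consecOcc d (permWord v) (permWord σ) (0 + i)) ∧
        (∀ i < ℓ - 1, ¬ consecOcc d (permWord v) (permWord σ) (n - ℓ + i)) ∧
          consecOcc d (permWord v) (permWord σ) (n - 1)} := by
    apply Nat.card_congr (Equiv.subtypeEquivRight _)
    intro σ
    constructor
    · rintro ⟨ha1, ha2, ha3⟩
      refine ⟨ha1, ?_, ?_⟩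
      · intro i hi hocc
        apply ha2 i hi
        rw [consecOcc_std d (permWord v) (n - ℓ) (ℓ + d - 1) h2pf σ (0 + i) (by omega)]
        rw [show (n - ℓ) + (0 + i) = n - ℓ + i from by omega]
        exact hocc
      · have hh := (consecOcc_std d (permWord v) (n - ℓ) (ℓ + d - 1) h2pf σ
          (ℓ - 1) (by omega)).mp ha3
        rw [show (n - ℓ) + (ℓ - 1) = n - 1 from by omega] at hh
        exact hh
    · rintro ⟨ha1, ha2, ha3⟩
      refine ⟨ha1, ?_, ?_⟩
      · intro i hi hocc
        apply ha2 i hi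
        have hh := (consecOcc_std d (permWord v) (n - ℓ) (ℓ + d - 1) h2pf σ
          (0 + i) (by omega)).mp hocc
        rw [show (n - ℓ) + (0 + i) = n - ℓ + i from by omega] at hh
        exact hh
      · rw [consecOcc_std d (permWord v) (n - ℓ) (ℓ + d - 1) h2pf σ (ℓ - 1) (by omega)]
        rw [show (n - ℓ) + (ℓ - 1) = n - 1 from by omega]
        exact ha3
  have h4' : Nat.factorial (n - ℓ - d + 1 + d - 1) * Nat.factorial (ℓ + d - 1) *
      Nat.card {σ : Equiv.Perm (Fin (n + d - 1)) //
      (∀ i < n - ℓ - d + 1, ¬ consecOcc d (permWord v) (permWord σ) (0 + i)) ∧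
        (∀ i < ℓ - 1, ¬ consecOcc d (permWord v) (permWord σ) (n - ℓ + i)) ∧
          consecOcc d (permWord v) (permWord σ) (n - 1)}
      = gPerm d (permWord v) (n - ℓ - d + 1 + d - 1) 0 *
        Nat.card {τ : Equiv.Perm (Fin (ℓ + d - 1)) //
          (∀ i < ℓ - 1, ¬ consecOcc d (permWord v) (permWord τ) (0 + i)) ∧
            consecOcc d (permWord v) (permWord τ) (ℓ - 1)} *
        Nat.factorial (n + d - 1) := by
    rw [← hDD]
    exact h4
  -- ========== value of QC ==========
  have h5 := card_partition
    (fun τ : Equiv.Perm (Fin (ℓ + d - 1)) =>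
      ∀ i < ℓ - 1, ¬ consecOcc d (permWord v) (permWord τ) (0 + i))
    (fun τ => consecOcc d (permWord v) (permWord τ) (ℓ - 1))
  have h6 : Nat.card {τ : Equiv.Perm (Fin (ℓ + d - 1)) //
      (∀ i < ℓ - 1, ¬ consecOcc d (permWord v) (permWord τ) (0 + i)) ∧
        ¬ consecOcc d (permWord v) (permWord τ) (ℓ - 1)}
      = gPerm d (permWord v) (ℓ + d - 1) 0 := by
    rw [gPerm_zero d hd (permWord v) (ℓ + d - 1)]
    apply Nat.card_congr (Equiv.subtypeEquivRight _)
    intro τ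
    constructor
    · rintro ⟨hp, hq⟩ i hit hocc
      rcases Nat.lt_or_ge i (ℓ - 1) with h' | h'
      · refine hp i h' ?_
        rw [show (0 + i : ℕ) = i from by omega]
        exact hocc
      · have hie : i = ℓ - 1 := by omega
        subst hie
        exact hq hocc
    · intro H
      constructor
      · intro i hi hocc
        refine H (0 + i) (by omega) hocc
      · exact H (ℓ - 1) (by omega)
  rw [h6] at h5
  have h7 := CL1 (N := ℓ + d - 1) d hd (permWord v) 0 (ℓ - 1) (by omega)
  have hQC : (Nat.card {τ : Equiv.Perm (Fin (ℓ + d - 1)) //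
      (∀ i < ℓ - 1, ¬ consecOcc d (permWord v) (permWord τ) (0 + i)) ∧
        consecOcc d (permWord v) (permWord τ) (ℓ - 1)} : ℝ)
      = (a (ℓ - 1) - a ℓ) * (Nat.factorial (ℓ + d - 1) : ℝ) := by
    have hX : (Nat.card {τ : Equiv.Perm (Fin (ℓ + d - 1)) //
        ∀ i < ℓ - 1, ¬ consecOcc d (permWord v) (permWord τ) (0 + i)} : ℝ)
        = a (ℓ - 1) * (Nat.factorial (ℓ + d - 1) : ℝ) := by
      apply mul_left_cancel₀ (hfne (ℓ - 1 + d - 1))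
      have h7R : (Nat.factorial (ℓ - 1 + d - 1) : ℝ) *
          (Nat.card {τ : Equiv.Perm (Fin (ℓ + d - 1)) //
          ∀ i < ℓ - 1, ¬ consecOcc d (permWord v) (permWord τ) (0 + i)} : ℝ)
          = (gPerm d (permWord v) (ℓ - 1 + d - 1) 0 : ℝ) * (Nat.factorial (ℓ + d - 1) : ℝ) := by
        exact_mod_cast h7
      rw [h7R, hg (ℓ - 1)]
      ring
    have h5R : (Nat.card {τ : Equiv.Perm (Fin (ℓ + d - 1)) //
        (∀ i < ℓ - 1, ¬ consecOcc d (permWord v) (permWord τ) (0 + i)) ∧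
          consecOcc d (permWord v) (permWord τ) (ℓ - 1)} : ℝ)
        + (gPerm d (permWord v) (ℓ + d - 1) 0 : ℝ)
        = (Nat.card {τ : Equiv.Perm (Fin (ℓ + d - 1)) //
        ∀ i < ℓ - 1, ¬ consecOcc d (permWord v) (permWord τ) (0 + i)} : ℝ) := by
      exact_mod_cast h5
    rw [hX, hg ℓ] at h5R
    linarith
  -- ========== real value of D ==========
  have hD : (Nat.card {σ : Equiv.Perm (Fin (n + d - 1)) //
      (∀ i < n - ℓ - d + 1, ¬ consecOcc d (permWord v) (permWord σ) (0 + i)) ∧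
        (∀ i < ℓ - 1, ¬ consecOcc d (permWord v) (permWord σ) (n - ℓ + i)) ∧
          consecOcc d (permWord v) (permWord σ) (n - 1)} : ℝ)
      = (a (ℓ - 1) - a ℓ) * a (n - ℓ - d + 1) * FN := by
    have h4R : (Nat.factorial (n - ℓ - d + 1 + d - 1) : ℝ) * (Nat.factorial (ℓ + d - 1) : ℝ) *
        (Nat.card {σ : Equiv.Perm (Fin (n + d - 1)) //
        (∀ i < n - ℓ - d + 1, ¬ consecOcc d (permWord v) (permWord σ) (0 + i)) ∧
          (∀ i < ℓ - 1, ¬ consecOcc d (permWord v) (permWord σ) (n - ℓ + i)) ∧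
            consecOcc d (permWord v) (permWord σ) (n - 1)} : ℝ)
        = (gPerm d (permWord v) (n - ℓ - d + 1 + d - 1) 0 : ℝ) *
          (Nat.card {τ : Equiv.Perm (Fin (ℓ + d - 1)) //
            (∀ i < ℓ - 1, ¬ consecOcc d (permWord v) (permWord τ) (0 + i)) ∧
              consecOcc d (permWord v) (permWord τ) (ℓ - 1)} : ℝ) * FN := by
      rw [hFN]; exact_mod_cast h4'
    rw [hg (n - ℓ - d + 1), hQC] at h4R
    refine mul_left_cancel₀ (mul_ne_zero (hfne (n - ℓ - d + 1 + d - 1)) (hfne (ℓ + d - 1)))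
      (h4R.trans (by ring))
  -- ========== partition D by the C-event ==========
  have h8 := card_partition
    (fun σ : Equiv.Perm (Fin (n + d - 1)) =>
      (∀ i < n - ℓ - d + 1, ¬ consecOcc d (permWord v) (permWord σ) (0 + i)) ∧
        (∀ i < ℓ - 1, ¬ consecOcc d (permWord v) (permWord σ) (n - ℓ + i)) ∧
          consecOcc d (permWord v) (permWord σ) (n - 1))
    (fun σ => (∀ i < n - 1, ¬ consecOcc d (permWord v) (permWord σ) (0 + i)) ∧
      consecOcc d (permWord v) (permWord σ) (n - 1))
  have h9 : Nat.card {σ : Equiv.Perm (Fin (n + d - 1)) //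
      ((∀ i < n - ℓ - d + 1, ¬ consecOcc d (permWord v) (permWord σ) (0 + i)) ∧
        (∀ i < ℓ - 1, ¬ consecOcc d (permWord v) (permWord σ) (n - ℓ + i)) ∧
          consecOcc d (permWord v) (permWord σ) (n - 1)) ∧
        ((∀ i < n - 1, ¬ consecOcc d (permWord v) (permWord σ) (0 + i)) ∧
          consecOcc d (permWord v) (permWord σ) (n - 1))}
      = Nat.card {σ : Equiv.Perm (Fin (n + d - 1)) //
        (∀ i < n - 1, ¬ consecOcc d (permWord v) (permWord σ) (0 + i)) ∧
          consecOcc d (permWord v) (permWord σ) (n - 1)} := by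
    apply Nat.card_congr (Equiv.subtypeEquivRight _)
    intro σ
    constructor
    · rintro ⟨_, hc⟩
      exact hc
    · rintro ⟨hb, hq⟩
      refine ⟨⟨fun i hi => hb i (by omega), ?_, hq⟩, hb, hq⟩
      intro i hi hocc
      refine hb (n - ℓ + i) (by omega) ?_
      rw [show (0 + (n - ℓ + i) : ℕ) = n - ℓ + i from by omega]
      exact hocc
  rw [h9] at h8
  -- ========== the E term and its union bound ==========
  have h10 : ∀ σ : Equiv.Perm (Fin (n + d - 1)),
      (((∀ i < n - ℓ - d + 1, ¬ consecOcc d (permWord v) (permWord σ) (0 + i)) ∧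
        (∀ i < ℓ - 1, ¬ consecOcc d (permWord v) (permWord σ) (n - ℓ + i)) ∧
          consecOcc d (permWord v) (permWord σ) (n - 1)) ∧
        ¬ ((∀ i < n - 1, ¬ consecOcc d (permWord v) (permWord σ) (0 + i)) ∧
          consecOcc d (permWord v) (permWord σ) (n - 1)))
      → ∃ j ∈ Finset.Ico (n - ℓ - d + 1) (n - ℓ),
          (∀ i < n - ℓ - 2 * d + 2, ¬ consecOcc d (permWord v) (permWord σ) (0 + i)) ∧
            consecOcc d (permWord v) (permWord σ) j := by
    rintro σ ⟨⟨ha1, ha2, ha3⟩, hnc⟩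
    have hnotall : ¬ ∀ i < n - 1, ¬ consecOcc d (permWord v) (permWord σ) (0 + i) :=
      fun hall => hnc ⟨hall, ha3⟩
    push_neg at hnotall
    obtain ⟨i, hi, hocc⟩ := hnotall
    have hlb : n - ℓ - d + 1 ≤ i := by
      by_contra hcon
      exact ha1 i (by omega) hocc
    have hub : i < n - ℓ := by
      by_contra hcon
      refine ha2 (i - (n - ℓ)) (by omega) ?_
      rw [show (n - ℓ) + (i - (n - ℓ)) = 0 + i from by omega]
      exact hocc
    refine ⟨i, Finset.mem_Ico.2 ⟨hlb, hub⟩, fun i' hi' => ha1 i' (by omega), ?_⟩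
    rw [show (i : ℕ) = 0 + i from by omega]
    exact hocc
  have h11 := card_mono _ _ h10
  have h12 := card_exists_le (Finset.Ico (n - ℓ - d + 1) (n - ℓ))
    (fun j (σ : Equiv.Perm (Fin (n + d - 1))) =>
      (∀ i < n - ℓ - 2 * d + 2, ¬ consecOcc d (permWord v) (permWord σ) (0 + i)) ∧
        consecOcc d (permWord v) (permWord σ) j)
  -- ========== value of each U_j ==========
  have hU : ∀ j ∈ Finset.Ico (n - ℓ - d + 1) (n - ℓ),
      (Nat.card {σ : Equiv.Perm (Fin (n + d - 1)) //
        (∀ i < n - ℓ - 2 * d + 2, ¬ consecOcc d (permWord v) (permWord σ) (0 + i)) ∧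
          consecOcc d (permWord v) (permWord σ) j} : ℝ)
      = a (n - ℓ - 2 * d + 2) * FN / (Nat.factorial d : ℝ) := by
    intro j hj
    rw [Finset.mem_Ico] at hj
    have hj2 : j + d ≤ n + d - 1 := by omega
    have h13 := CL2 (N := n + d - 1) d hd (permWord v) (n - ℓ - 2 * d + 2) d j
      (by omega) hj2 (fun τ => consecOcc d (permWord v) (permWord τ) 0)
    have h14 : Nat.card {σ : Equiv.Perm (Fin (n + d - 1)) //
        (∀ i < n - ℓ - 2 * d + 2, ¬ consecOcc d (permWord v) (permWord σ) (0 + i)) ∧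
          consecOcc d (permWord v) (permWord (std j d hj2 σ)) 0}
        = Nat.card {σ : Equiv.Perm (Fin (n + d - 1)) //
        (∀ i < n - ℓ - 2 * d + 2, ¬ consecOcc d (permWord v) (permWord σ) (0 + i)) ∧
          consecOcc d (permWord v) (permWord σ) j} := by
      apply Nat.card_congr (Equiv.subtypeEquivRight _)
      intro σ
      constructor
      · rintro ⟨hp, hq⟩
        refine ⟨hp, ?_⟩
        have hh := (consecOcc_std d (permWord v) j d hj2 σ 0 (by omega)).mp hq
        rw [show (j + 0 : ℕ) = j from by omega] at hh
        exact hh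
      · rintro ⟨hp, hq⟩
        refine ⟨hp, ?_⟩
        rw [consecOcc_std d (permWord v) j d hj2 σ 0 (by omega)]
        rw [show (j + 0 : ℕ) = j from by omega]
        exact hq
    have h13' : Nat.factorial (n - ℓ - 2 * d + 2 + d - 1) * Nat.factorial d *
        Nat.card {σ : Equiv.Perm (Fin (n + d - 1)) //
        (∀ i < n - ℓ - 2 * d + 2, ¬ consecOcc d (permWord v) (permWord σ) (0 + i)) ∧
          consecOcc d (permWord v) (permWord σ) j}
        = gPerm d (permWord v) (n - ℓ - 2 * d + 2 + d - 1) 0 *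
          Nat.card {τ : Equiv.Perm (Fin d) //
            consecOcc d (permWord v) (permWord τ) 0} *
          Nat.factorial (n + d - 1) := by
      rw [← h14]
      exact h13
    rw [countSingle d v, mul_one] at h13'
    have h13R : (Nat.factorial (n - ℓ - 2 * d + 2 + d - 1) : ℝ) * (Nat.factorial d : ℝ) *
        (Nat.card {σ : Equiv.Perm (Fin (n + d - 1)) //
        (∀ i < n - ℓ - 2 * d + 2, ¬ consecOcc d (permWord v) (permWord σ) (0 + i)) ∧
          consecOcc d (permWord v) (permWord σ) j} : ℝ)
        = (gPerm d (permWord v) (n - ℓ - 2 * d + 2 + d - 1) 0 : ℝ) * FN := by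
      rw [hFN]; exact_mod_cast h13'
    rw [hg (n - ℓ - 2 * d + 2)] at h13R
    rw [eq_div_iff (hfne d)]
    refine mul_left_cancel₀ (hfne (n - ℓ - 2 * d + 2 + d - 1)) ?_
    calc (Nat.factorial (n - ℓ - 2 * d + 2 + d - 1) : ℝ) *
          ((Nat.card {σ : Equiv.Perm (Fin (n + d - 1)) //
          (∀ i < n - ℓ - 2 * d + 2, ¬ consecOcc d (permWord v) (permWord σ) (0 + i)) ∧
            consecOcc d (permWord v) (permWord σ) j} : ℝ) * (Nat.factorial d : ℝ))
        = (Nat.factorial (n - ℓ - 2 * d + 2 + d - 1) : ℝ) * (Nat.factorial d : ℝ) *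
          (Nat.card {σ : Equiv.Perm (Fin (n + d - 1)) //
          (∀ i < n - ℓ - 2 * d + 2, ¬ consecOcc d (permWord v) (permWord σ) (0 + i)) ∧
            consecOcc d (permWord v) (permWord σ) j} : ℝ) := by ring
      _ = a (n - ℓ - 2 * d + 2) * (Nat.factorial (n - ℓ - 2 * d + 2 + d - 1) : ℝ) * FN := h13R
      _ = (Nat.factorial (n - ℓ - 2 * d + 2 + d - 1) : ℝ) *
          (a (n - ℓ - 2 * d + 2) * FN) := by ring
  -- ========== sum bound ==========
  have hIcoCard : (Finset.Ico (n - ℓ - d + 1) (n - ℓ)).card = d - 1 := by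
    rw [Nat.card_Ico]
    omega
  have hsum : ((∑ j ∈ Finset.Ico (n - ℓ - d + 1) (n - ℓ),
      Nat.card {σ : Equiv.Perm (Fin (n + d - 1)) //
        (∀ i < n - ℓ - 2 * d + 2, ¬ consecOcc d (permWord v) (permWord σ) (0 + i)) ∧
          consecOcc d (permWord v) (permWord σ) j} : ℕ) : ℝ)
      = ((d : ℝ) - 1) * (a (n - ℓ - 2 * d + 2) * FN / (Nat.factorial d : ℝ)) := by
    push_cast
    rw [Finset.sum_congr rfl hU, Finset.sum_const, hIcoCard, nsmul_eq_mul]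
    have : ((d - 1 : ℕ) : ℝ) = (d : ℝ) - 1 := by
      push_cast [Nat.cast_sub hd]
      ring
    rw [this]
  -- ========== conclusion ==========
  have hFNpos : (0 : ℝ) < FN := hfpos (n + d - 1)
  have hE : (Nat.card {σ : Equiv.Perm (Fin (n + d - 1)) //
      ((∀ i < n - ℓ - d + 1, ¬ consecOcc d (permWord v) (permWord σ) (0 + i)) ∧
        (∀ i < ℓ - 1, ¬ consecOcc d (permWord v) (permWord σ) (n - ℓ + i)) ∧
          consecOcc d (permWord v) (permWord σ) (n - 1)) ∧
        ¬ ((∀ i < n - 1, ¬ consecOcc d (permWord v) (permWord σ) (0 + i)) ∧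
          consecOcc d (permWord v) (permWord σ) (n - 1))} : ℝ)
      = (a n - a (n - 1) + (a (ℓ - 1) - a ℓ) * a (n - ℓ - d + 1)) * FN := by
    have h8R : (Nat.card {σ : Equiv.Perm (Fin (n + d - 1)) //
        (∀ i < n - 1, ¬ consecOcc d (permWord v) (permWord σ) (0 + i)) ∧
          consecOcc d (permWord v) (permWord σ) (n - 1)} : ℝ)
        + (Nat.card {σ : Equiv.Perm (Fin (n + d - 1)) //
        ((∀ i < n - ℓ - d + 1, ¬ consecOcc d (permWord v) (permWord σ) (0 + i)) ∧
          (∀ i < ℓ - 1, ¬ consecOcc d (permWord v) (permWord σ) (n - ℓ + i)) ∧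
            consecOcc d (permWord v) (permWord σ) (n - 1)) ∧
          ¬ ((∀ i < n - 1, ¬ consecOcc d (permWord v) (permWord σ) (0 + i)) ∧
            consecOcc d (permWord v) (permWord σ) (n - 1))} : ℝ)
        = (Nat.card {σ : Equiv.Perm (Fin (n + d - 1)) //
        (∀ i < n - ℓ - d + 1, ¬ consecOcc d (permWord v) (permWord σ) (0 + i)) ∧
          (∀ i < ℓ - 1, ¬ consecOcc d (permWord v) (permWord σ) (n - ℓ + i)) ∧
            consecOcc d (permWord v) (permWord σ) (n - 1)} : ℝ) := by
      exact_mod_cast h8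
    rw [hC, hD] at h8R
    linarith
  have hEle : (Nat.card {σ : Equiv.Perm (Fin (n + d - 1)) //
      ((∀ i < n - ℓ - d + 1, ¬ consecOcc d (permWord v) (permWord σ) (0 + i)) ∧
        (∀ i < ℓ - 1, ¬ consecOcc d (permWord v) (permWord σ) (n - ℓ + i)) ∧
          consecOcc d (permWord v) (permWord σ) (n - 1)) ∧
        ¬ ((∀ i < n - 1, ¬ consecOcc d (permWord v) (permWord σ) (0 + i)) ∧
          consecOcc d (permWord v) (permWord σ) (n - 1))} : ℝ)
      ≤ ((d : ℝ) - 1) * (a (n - ℓ - 2 * d + 2) * FN / (Nat.factorial d : ℝ)) := by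
    rw [← hsum]
    exact_mod_cast le_trans h11 h12
  constructor
  · have hnonneg : (0 : ℝ) ≤ (a n - a (n - 1) + (a (ℓ - 1) - a ℓ) * a (n - ℓ - d + 1)) * FN := by
      rw [← hE]
      exact Nat.cast_nonneg _
    rcases le_or_gt 0 (a n - a (n - 1) + (a (ℓ - 1) - a ℓ) * a (n - ℓ - d + 1)) with h | h
    · exact h
    · have hneg := mul_neg_of_neg_of_pos h hFNpos
      linarith
  · have hle : (a n - a (n - 1) + (a (ℓ - 1) - a ℓ) * a (n - ℓ - d + 1)) * FN
        ≤ (((d : ℝ) - 1) / (Nat.factorial d : ℝ) * a (n - ℓ - 2 * d + 2)) * FN := by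
      rw [← hE]
      refine le_trans hEle (le_of_eq ?_)
      field_simp
    exact le_of_mul_le_mul_right hle hFNpos
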